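/- (Gauss–Markov theorem) Let n ≥ q ≥ 1, let 𝔵 ∈ ℝ^{n×q} be a deterministic matrix of full column rank, β ∈ ℝ^q, σ > 0, and let e be a random vector in ℝ^n with E[e] = 0 and covariance matrix cov(e) = σ²·Id_n. Set Y = 𝔵β + e and let β̂ = (𝔵ᵀ𝔵)^{−1}𝔵ᵀY be the ordinary least squares estimator. Then E[β̂] = β and cov(β̂) = σ²·(𝔵ᵀ𝔵)^{−1}; moreover, for every matrix C ∈ ℝ^{q×n} such that the linear estimator β̄ = CY is unbiased for every β ∈ ℝ^q (equivalently C𝔵 = Id_q), the matrix cov(β̄) − cov(β̂) is positive semidefinite. -/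

import Mathlib

open MeasureTheory ProbabilityTheory Matrix Filter
open scoped ProbabilityTheory ENNReal

/-- Covariance matrix of a random vector, cov(V)ᵢⱼ = E[VᵢVⱼ] - E[Vᵢ]E[Vⱼ]. -/
noncomputable def covMatrix {Ω : Type*} [MeasureSpace Ω] {q : ℕ}
    (V : Ω → Fin q → ℝ) : Matrix (Fin q) (Fin q) ℝ :=
  Matrix.of fun i j => (∫ ω, V ω i * V ω j) - (∫ ω, V ω i) * (∫ ω, V ω j)

section GMaux

variable {Ω : Type*} [MeasureSpace Ω] [IsProbabilityMeasure (ℙ : Measure Ω)]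
variable {n q : ℕ} {e : Ω → Fin n → ℝ}

lemma GM.isUnit_of_rank_eq {M : Matrix (Fin q) (Fin q) ℝ} (h : M.rank = q) : IsUnit M := by
  rw [← Matrix.mulVec_surjective_iff_isUnit]
  have hr : LinearMap.range M.mulVecLin = ⊤ := by
    apply Submodule.eq_top_of_finrank_eq
    rw [← Matrix.rank, h, Module.finrank_fin_fun]
  intro v
  obtain ⟨w, hw⟩ := (LinearMap.range_eq_top).mp hr v
  exact ⟨w, hw⟩

lemma GM.integrable_prod (hint1 : ∀ i, Integrable (fun ω => e ω i) ℙ)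
    (hint2 : ∀ i j, Integrable (fun ω => e ω i * e ω j) ℙ)
    (a b : ℝ) (k l : Fin n) :
    Integrable (fun ω => (a + e ω k) * (b + e ω l)) ℙ := by
  have h : (fun ω => (a + e ω k) * (b + e ω l))
      = fun ω => a * b + (a * e ω l + (b * e ω k + e ω k * e ω l)) := by
    funext ω; ring
  rw [h]
  exact (integrable_const _).add (((hint1 l).const_mul a).add
    (((hint1 k).const_mul b).add (hint2 k l)))

lemma GM.int_prod (hint1 : ∀ i, Integrable (fun ω => e ω i) ℙ)
    (hint2 : ∀ i j, Integrable (fun ω => e ω i * e ω j) ℙ)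
    (hmean : ∀ i, (∫ ω, e ω i ∂ℙ) = 0)
    (a b : ℝ) (k l : Fin n) :
    (∫ ω, (a + e ω k) * (b + e ω l) ∂ℙ) = a * b + covMatrix e k l := by
  have h : (fun ω => (a + e ω k) * (b + e ω l))
      = fun ω => a * b + (a * e ω l + (b * e ω k + e ω k * e ω l)) := by
    funext ω; ring
  have h3 : Integrable (fun ω => b * e ω k + e ω k * e ω l) ℙ := by
    exact ((hint1 k).const_mul b).add (hint2 k l)
  have h2 : Integrable (fun ω => a * e ω l + (b * e ω k + e ω k * e ω l)) ℙ := by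
    exact ((hint1 l).const_mul a).add h3
  rw [h, integral_add (integrable_const _) h2,
    integral_add ((hint1 l).const_mul a) h3,
    integral_add ((hint1 k).const_mul b) (hint2 k l)]
  simp [integral_const_mul, hmean k, hmean l, covMatrix]

lemma GM.mean (hint1 : ∀ i, Integrable (fun ω => e ω i) ℙ)
    (hmean : ∀ i, (∫ ω, e ω i ∂ℙ) = 0)
    (M : Matrix (Fin q) (Fin n) ℝ) (c : Fin n → ℝ) (i : Fin q) :
    (∫ ω, (M *ᵥ (c + e ω)) i ∂ℙ) = (M *ᵥ c) i := by
  simp only [mulVec, dotProduct, Pi.add_apply]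
  have hik : ∀ k : Fin n, Integrable (fun ω => M i k * (c k + e ω k)) ℙ := by
    intro k
    exact ((integrable_const (c k)).add (hint1 k)).const_mul (M i k)
  rw [integral_finset_sum _ (fun k _ => hik k)]
  refine Finset.sum_congr rfl fun k _ => ?_
  rw [integral_const_mul, integral_add (integrable_const _) (hint1 k), hmean k,
    integral_const]
  simp

lemma GM.cov (hint1 : ∀ i, Integrable (fun ω => e ω i) ℙ)
    (hint2 : ∀ i j, Integrable (fun ω => e ω i * e ω j) ℙ)
    (hmean : ∀ i, (∫ ω, e ω i ∂ℙ) = 0)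
    (M : Matrix (Fin q) (Fin n) ℝ) (c : Fin n → ℝ) :
    covMatrix (fun ω => M *ᵥ (c + e ω)) = M * covMatrix e * Mᵀ := by
  ext i j
  have expand : ∀ ω, (M *ᵥ (c + e ω)) i * (M *ᵥ (c + e ω)) j
      = ∑ k, ∑ l, M i k * M j l * ((c k + e ω k) * (c l + e ω l)) := by
    intro ω
    simp only [mulVec, dotProduct, Pi.add_apply, Finset.sum_mul_sum]
    exact Finset.sum_congr rfl fun k _ => Finset.sum_congr rfl fun l _ => by ring
  have hprod : (∫ ω, (M *ᵥ (c + e ω)) i * (M *ᵥ (c + e ω)) j ∂ℙ)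
      = ∑ k, ∑ l, M i k * M j l * (c k * c l + covMatrix e k l) := by
    simp only [expand]
    have hI : ∀ k l : Fin n,
        Integrable (fun ω => M i k * M j l * ((c k + e ω k) * (c l + e ω l))) ℙ := by
      intro k l
      exact (GM.integrable_prod hint1 hint2 (c k) (c l) k l).const_mul _
    rw [integral_finset_sum _ (fun k _ => integrable_finset_sum _ (fun l _ => hI k l))]
    refine Finset.sum_congr rfl fun k _ => ?_
    rw [integral_finset_sum _ (fun l _ => hI k l)]
    refine Finset.sum_congr rfl fun l _ => ?_
    rw [integral_const_mul, GM.int_prod hint1 hint2 hmean]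
  have hrhs : (M * covMatrix e * Mᵀ) i j
      = ∑ k, ∑ l, M i k * M j l * covMatrix e k l := by
    simp only [Matrix.mul_apply, Matrix.transpose_apply, Finset.sum_mul]
    rw [Finset.sum_comm]
    exact Finset.sum_congr rfl fun k _ => Finset.sum_congr rfl fun l _ => by ring
  show (∫ ω, (M *ᵥ (c + e ω)) i * (M *ᵥ (c + e ω)) j ∂ℙ)
      - (∫ ω, (M *ᵥ (c + e ω)) i ∂ℙ) * (∫ ω, (M *ᵥ (c + e ω)) j ∂ℙ)
      = (M * covMatrix e * Mᵀ) i j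
  rw [hprod, GM.mean hint1 hmean, GM.mean hint1 hmean, hrhs]
  simp only [mulVec, dotProduct, Finset.sum_mul_sum, ← Finset.sum_sub_distrib]
  exact Finset.sum_congr rfl fun k _ => Finset.sum_congr rfl fun l _ => by ring

lemma GM.posSemidef_smul {m : ℕ} {M : Matrix (Fin m) (Fin m) ℝ} (h : M.PosSemidef)
    {a : ℝ} (ha : 0 ≤ a) : (a • M).PosSemidef := by
  constructor
  · show (a • M)ᴴ = a • M
    rw [Matrix.conjTranspose_smul, h.1, star_trivial]
  · intro x
    have := h.2 x
    have e : (x.sum fun i xi => x.sum fun j xj => star xi * (a • M) i j * xj)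
        = a * x.sum fun i xi => x.sum fun j xj => star xi * M i j * xj := by
      rw [Finsupp.mul_sum]
      apply Finsupp.sum_congr
      intro i _
      rw [Finsupp.mul_sum]
      apply Finsupp.sum_congr
      intro j _
      simp only [Matrix.smul_apply, smul_eq_mul]
      ring
    rw [e]
    exact mul_nonneg ha this

end GMaux

/-- Gauss–Markov theorem: the OLS estimator is unbiased with covariance
σ²(AᵀA)⁻¹, and any unbiased linear estimator has covariance at least as large
(in the positive semidefinite order). -/
theorem gauss_markov
    {Ω : Type*} [MeasureSpace Ω] [IsProbabilityMeasure (ℙ : Measure Ω)]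
    (n q : ℕ) (hq : 1 ≤ q) (hnq : q ≤ n)
    (A : Matrix (Fin n) (Fin q) ℝ) (hrank : A.rank = q)
    (β : Fin q → ℝ) (σ : ℝ) (hσ : 0 < σ)
    (e : Ω → Fin n → ℝ) (hmeas : ∀ i, Measurable fun ω => e ω i)
    (hint1 : ∀ i, Integrable (fun ω => e ω i) ℙ)
    (hint2 : ∀ i j, Integrable (fun ω => e ω i * e ω j) ℙ)
    (hmean : ∀ i, (∫ ω, e ω i ∂ℙ) = 0)
    (hcov : covMatrix e = σ ^ 2 • (1 : Matrix (Fin n) (Fin n) ℝ)) :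
    (∀ i, (∫ ω, (((Aᵀ * A)⁻¹ * Aᵀ) *ᵥ (A *ᵥ β + e ω)) i ∂ℙ) = β i) ∧
    covMatrix (fun ω => ((Aᵀ * A)⁻¹ * Aᵀ) *ᵥ (A *ᵥ β + e ω)) = σ ^ 2 • (Aᵀ * A)⁻¹ ∧
    ∀ C : Matrix (Fin q) (Fin n) ℝ,
      (∀ β' : Fin q → ℝ, ∀ i, (∫ ω, (C *ᵥ (A *ᵥ β' + e ω)) i ∂ℙ) = β' i) →
      (covMatrix (fun ω => C *ᵥ (A *ᵥ β + e ω)) -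
        covMatrix (fun ω => ((Aᵀ * A)⁻¹ * Aᵀ) *ᵥ (A *ᵥ β + e ω))).PosSemidef := by
  set B : Matrix (Fin q) (Fin n) ℝ := (Aᵀ * A)⁻¹ * Aᵀ with hB
  have hunit : IsUnit (Aᵀ * A) := by
    apply GM.isUnit_of_rank_eq
    rw [Matrix.rank_transpose_mul_self, hrank]
  have hdet : IsUnit (Aᵀ * A).det := (Matrix.isUnit_iff_isUnit_det _).mp hunit
  have hBA : B * A = 1 := by
    rw [hB, Matrix.mul_assoc, Matrix.nonsing_inv_mul _ hdet]
  have hinvT : ((Aᵀ * A)⁻¹)ᵀ = (Aᵀ * A)⁻¹ := by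
    rw [Matrix.transpose_nonsing_inv, Matrix.transpose_mul, Matrix.transpose_transpose]
  have hBBt : B * Bᵀ = (Aᵀ * A)⁻¹ := by
    rw [hB, Matrix.transpose_mul, hinvT, Matrix.transpose_transpose]
    calc (Aᵀ * A)⁻¹ * Aᵀ * (A * (Aᵀ * A)⁻¹)
        = (Aᵀ * A)⁻¹ * (Aᵀ * A) * (Aᵀ * A)⁻¹ := by
          simp only [Matrix.mul_assoc]
      _ = (Aᵀ * A)⁻¹ := by
          rw [Matrix.nonsing_inv_mul _ hdet, Matrix.one_mul]
  have hcovB : covMatrix (fun ω => B *ᵥ (A *ᵥ β + e ω)) = σ ^ 2 • (Aᵀ * A)⁻¹ := by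
    rw [GM.cov hint1 hint2 hmean, hcov, Matrix.mul_smul, Matrix.smul_mul,
      Matrix.mul_one, hBBt]
  refine ⟨?_, hcovB, ?_⟩
  · intro i
    rw [GM.mean hint1 hmean, Matrix.mulVec_mulVec, hBA, Matrix.one_mulVec]
  · intro C hC
    have hCA : C * A = 1 := by
      ext i j
      have := hC (Pi.single j 1) i
      rw [GM.mean hint1 hmean] at this
      rw [Matrix.mulVec_mulVec] at this
      rw [Matrix.mulVec_single] at this
      simpa [Matrix.one_apply, Pi.single_apply, eq_comm] using this
    have hCBt : C * Bᵀ = (Aᵀ * A)⁻¹ := by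
      rw [hB, Matrix.transpose_mul, hinvT, Matrix.transpose_transpose,
        ← Matrix.mul_assoc, hCA, Matrix.one_mul]
    have hBCt : B * Cᵀ = (Aᵀ * A)⁻¹ := by
      have := congrArg Matrix.transpose hCBt
      rwa [Matrix.transpose_mul, Matrix.transpose_transpose, hinvT] at this
    have hcovC : covMatrix (fun ω => C *ᵥ (A *ᵥ β + e ω)) = σ ^ 2 • (C * Cᵀ) := by
      rw [GM.cov hint1 hint2 hmean, hcov, Matrix.mul_smul, Matrix.smul_mul, Matrix.mul_one]
    have hdiff : covMatrix (fun ω => C *ᵥ (A *ᵥ β + e ω)) -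
        covMatrix (fun ω => B *ᵥ (A *ᵥ β + e ω))
        = σ ^ 2 • ((C - B) * (C - B)ᵀ) := by
      rw [hcovC, hcovB, ← smul_sub]
      congr 1
      rw [Matrix.transpose_sub, Matrix.sub_mul, Matrix.mul_sub, Matrix.mul_sub,
        hCBt, hBCt, hBBt]
      abel
    rw [hdiff]
    have hct : (C - B)ᵀ = (C - B)ᴴ := by
      ext i j
      simp [Matrix.conjTranspose_apply]
    rw [hct]
    exact GM.posSemidef_smul (Matrix.posSemidef_self_mul_conjTranspose _) (sq_nonneg σ)
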